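/- For all nonnegative real numbers x, y, z with x + y + z = 1, we have x + y/3 + z^3 ≥ 1/6. -/
import Mathlib

theorem simplex_ineq_one_sixth (x y z : ℝ) (hx : 0 ≤ x) (hy : 0 ≤ y) (hz : 0 ≤ z)
    (hsum : x + y + z = 1) : x + y / 3 + z ^ 3 ≥ 1 / 6 := by
  nlinarith [sq_nonneg (z - 1/3), sq_nonneg z, mul_nonneg hz (sq_nonneg (z - 1/3))]
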